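/- arXiv:2109.00530 — 2 statements merged into one kernel-verified Lean document; each statement's English description precedes it below -/
import Mathlib

section
/- Let x ∈ ℝ^n have nondecreasing coordinates. For any permutation π of {1,…,n}, let S_π = {p ∈ ℝ^n : p_{π(i)} ≤ p_{π(i+1)} for all i} and let x^π be the mirror of x defined by (x^π)_{π(i)} = x_i. Then d₂(x, S_π) ≤ ‖x - x^π‖₂ ≤ 2·d₂(x, S_π), where d₂(x, S_π) = inf_{p ∈ S_π} ‖x - p‖₂. -/
/-- The mirror of `x` in the cell of the permutation `π`, defined by `(x^π)_{π(i)} = x_i`. -/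
noncomputable def mirror {n : ℕ} (x : EuclideanSpace ℝ (Fin n)) (π : Equiv.Perm (Fin n)) :
    EuclideanSpace ℝ (Fin n) :=
  WithLp.toLp 2 (fun i => x (π.symm i))

/-- The cell `S_π = {p : p_{π(1)} ≤ ⋯ ≤ p_{π(n)}}`. -/
def cell {n : ℕ} (π : Equiv.Perm (Fin n)) : Set (EuclideanSpace ℝ (Fin n)) :=
  {p | Monotone fun i => p (π i)}

lemma mirror_mem {n : ℕ} (x : EuclideanSpace ℝ (Fin n)) (hx : Monotone fun i => x i)
    (π : Equiv.Perm (Fin n)) : mirror x π ∈ cell π := by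
  intro i j hij
  show x (π.symm (π i)) ≤ x (π.symm (π j))
  rw [Equiv.symm_apply_apply, Equiv.symm_apply_apply]
  exact hx hij

lemma inner_le {n : ℕ} (x : EuclideanSpace ℝ (Fin n)) (hx : Monotone fun i => x i)
    (π : Equiv.Perm (Fin n)) (p : EuclideanSpace ℝ (Fin n)) (hp : p ∈ cell π) :
    (inner ℝ x p : ℝ) ≤ inner ℝ (mirror x π) p := by
  have h1 : (inner ℝ (mirror x π) p : ℝ) = ∑ j, x j * p (π j) := by
    rw [PiLp.inner_apply,
      ← Equiv.sum_comp π (fun i => (inner ℝ (mirror x π i) (p i) : ℝ))]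
    refine Finset.sum_congr rfl fun j _ => ?_
    show (inner ℝ (x (π.symm (π j))) (p (π j)) : ℝ) = _
    rw [Equiv.symm_apply_apply, RCLike.inner_apply]
    simp [mul_comm]
  have h2 : (inner ℝ x p : ℝ) = ∑ j, x j * (fun j => p (π j)) (π.symm j) := by
    rw [PiLp.inner_apply]
    refine Finset.sum_congr rfl fun j _ => ?_
    show (inner ℝ (x j) (p j) : ℝ) = x j * p (π (π.symm j))
    rw [Equiv.apply_symm_apply, RCLike.inner_apply]
    simp [mul_comm]
  rw [h1, h2]
  exact (hx.monovary hp).sum_mul_comp_perm_le_sum_mul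

lemma norm_mirror {n : ℕ} (x : EuclideanSpace ℝ (Fin n)) (π : Equiv.Perm (Fin n)) :
    ‖mirror x π‖ = ‖x‖ := by
  rw [EuclideanSpace.norm_eq, EuclideanSpace.norm_eq,
    ← Equiv.sum_comp π (fun i => ‖mirror x π i‖ ^ 2)]
  congr 1
  refine Finset.sum_congr rfl fun j _ => ?_
  show ‖x (π.symm (π j))‖ ^ 2 = _
  rw [Equiv.symm_apply_apply]

lemma key {n : ℕ} (x : EuclideanSpace ℝ (Fin n)) (hx : Monotone fun i => x i)
    (π : Equiv.Perm (Fin n)) (p : EuclideanSpace ℝ (Fin n)) (hp : p ∈ cell π) :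
    ‖mirror x π - p‖ ≤ ‖x - p‖ := by
  have h := inner_le x hx π p hp
  have h1 : ‖mirror x π - p‖ ^ 2 ≤ ‖x - p‖ ^ 2 := by
    rw [norm_sub_sq_real, norm_sub_sq_real, norm_mirror]
    linarith
  nlinarith [norm_nonneg (mirror x π - p), norm_nonneg (x - p)]

theorem stmt5 {n : ℕ} (x : EuclideanSpace ℝ (Fin n)) (hx : Monotone fun i => x i)
    (π : Equiv.Perm (Fin n)) :
    Metric.infDist x (cell π) ≤ ‖x - mirror x π‖ ∧
      ‖x - mirror x π‖ ≤ 2 * Metric.infDist x (cell π) := by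
  constructor
  · rw [← dist_eq_norm]
    exact Metric.infDist_le_dist_of_mem (mirror_mem x hx π)
  · rw [show (2:ℝ) * Metric.infDist x (cell π) = Metric.infDist x (cell π) * 2 by ring,
      ← div_le_iff₀ (by norm_num)]
    apply le_of_not_gt
    rw [Metric.infDist_lt_iff ⟨_, mirror_mem x hx π⟩]
    rintro ⟨y, hy, hlt⟩
    rw [dist_eq_norm, lt_div_iff₀ (by norm_num)] at hlt
    have h2 : ‖x - mirror x π‖ ≤ ‖x - y‖ * 2 := by
      have tri : ‖x - mirror x π‖ ≤ ‖x - y‖ + ‖y - mirror x π‖ := by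
        have := dist_triangle x y (mirror x π)
        simpa [dist_eq_norm] using this
      have h3 : ‖y - mirror x π‖ ≤ ‖x - y‖ := by
        rw [norm_sub_rev y]
        exact key x hx π y hy
      linarith
    linarith
end

section
/- Let f : ℝ^n → ℝ be locally Lipschitz, x ∈ ℝ^n, ε > 0, and suppose g ∈ ∂_ε f(x) is any element of the Goldstein ε-subgradient satisfying ⟨w, g⟩ ≥ ‖g‖² for all w ∈ ∂_ε f(x) (e.g., g is the minimal-norm element). Then for all 0 ≤ t ≤ ε/‖g‖ (when g ≠ 0), f(x − t g) ≤ f(x) − t ‖g‖². -/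
open Filter Topology

/-- The Goldstein ε-subgradient: the closed convex hull of all limits of gradients of `f`
at differentiability points converging to some point within distance `ε` of `x`. -/
noncomputable def goldstein {n : ℕ} (f : EuclideanSpace ℝ (Fin n) → ℝ) (ε : ℝ)
    (x : EuclideanSpace ℝ (Fin n)) : Set (EuclideanSpace ℝ (Fin n)) :=
  closure (convexHull ℝ {g | ∃ x' : EuclideanSpace ℝ (Fin n), ‖x' - x‖ ≤ ε ∧
    ∃ u : ℕ → EuclideanSpace ℝ (Fin n),
      Tendsto u atTop (𝓝 x') ∧ (∀ i, DifferentiableAt ℝ f (u i)) ∧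
      Tendsto (fun i => gradient f (u i)) atTop (𝓝 g)})

open Set MeasureTheory

open Filter Topology Set MeasureTheory

/-- A locally Lipschitz real function is Lipschitz (with explicit real bound) on
any compact set. -/
lemma locLip_bound_on_compact {E : Type*} [MetricSpace E] {f : E → ℝ}
    (hf : LocallyLipschitz f) {K : Set E} (hK : IsCompact K) :
    ∃ C : ℝ, 0 ≤ C ∧ ∀ a ∈ K, ∀ b ∈ K, |f a - f b| ≤ C * dist a b := by
  rcases K.eq_empty_or_nonempty with hKe | hKne
  · exact ⟨0, le_refl _, by simp [hKe]⟩
  have h1 : ∀ y : E, ∃ (c : ℝ) (r : ℝ), 0 ≤ c ∧ 0 < r ∧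
      ∀ a ∈ Metric.ball y (2 * r), ∀ b ∈ Metric.ball y (2 * r),
        |f a - f b| ≤ c * dist a b := by
    intro y
    obtain ⟨c, t, ht, hlip⟩ := hf y
    obtain ⟨ρ, hρ, hball⟩ := Metric.mem_nhds_iff.1 ht
    refine ⟨c, ρ / 2, c.coe_nonneg, by linarith, ?_⟩
    intro a ha b hb
    have h2 : (2 : ℝ) * (ρ / 2) = ρ := by ring
    rw [h2] at ha hb
    have := hlip.dist_le_mul a (hball ha) b (hball hb)
    simpa [Real.dist_eq] using this
  choose c r hc hr hball using h1
  -- finite subcover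
  obtain ⟨s, _hsK, hs⟩ := hK.elim_nhds_subcover (fun y => Metric.ball y (r y))
    (fun y _ => Metric.ball_mem_nhds y (hr y))
  have hsne : s.Nonempty := by
    rcases hKne with ⟨z, hz⟩
    rcases Set.mem_iUnion₂.1 (hs hz) with ⟨i, hi, _⟩
    exact ⟨i, hi⟩
  set δ : ℝ := s.inf' hsne r with hδdef
  have hδpos : 0 < δ := by
    rw [hδdef]
    apply Finset.lt_inf'_iff _ |>.2
    exact fun i _ => hr i
  set C₀ : ℝ := s.sup' hsne c with hC₀def
  obtain ⟨M, hM⟩ := hK.exists_bound_of_continuousOn hf.continuous.continuousOn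
  have hM0 : 0 ≤ M := le_trans (norm_nonneg _) (hM _ hKne.choose_spec)
  refine ⟨max C₀ (2 * M / δ), le_trans (by positivity) (le_max_right _ _), ?_⟩
  intro a ha b hb
  by_cases hd : dist a b < δ
  · rcases Set.mem_iUnion₂.1 (hs ha) with ⟨i, hi, hai⟩
    have hbi : b ∈ Metric.ball i (2 * r i) := by
      have h3 : δ ≤ r i := Finset.inf'_le r hi
      have := Metric.mem_ball.1 hai
      refine Metric.mem_ball.2 ?_
      calc dist b i ≤ dist b a + dist a i := dist_triangle _ _ _
        _ < δ + r i := by rw [dist_comm b a]; exact add_lt_add hd this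
        _ ≤ 2 * r i := by linarith
    have hai2 : a ∈ Metric.ball i (2 * r i) :=
      Metric.mem_ball.2 (lt_of_lt_of_le (Metric.mem_ball.1 hai) (by linarith [hr i]))
    calc |f a - f b| ≤ c i * dist a b := hball i a hai2 b hbi
      _ ≤ max C₀ (2 * M / δ) * dist a b := by
          apply mul_le_mul_of_nonneg_right _ dist_nonneg
          exact le_trans (Finset.le_sup' c hi) (le_max_left _ _)
  · push_neg at hd
    calc |f a - f b| ≤ |f a| + |f b| := abs_sub _ _
      _ ≤ M + M := add_le_add (hM a ha) (hM b hb)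
      _ = (2 * M / δ) * δ := by field_simp; ring
      _ ≤ (2 * M / δ) * dist a b := by
          apply mul_le_mul_of_nonneg_left hd (by positivity)
      _ ≤ max C₀ (2 * M / δ) * dist a b :=
          mul_le_mul_of_nonneg_right (le_max_right _ _) dist_nonneg


lemma locLip_ae_diff {n : ℕ} {f : EuclideanSpace ℝ (Fin n) → ℝ}
    (hf : LocallyLipschitz f) :
    ∀ᵐ y ∂(volume : Measure (EuclideanSpace ℝ (Fin n))), DifferentiableAt ℝ f y := by
  rw [ae_iff]
  apply measure_null_of_locally_null
  intro y _
  obtain ⟨K, t, ht, hlip⟩ := hf y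
  refine ⟨{z | ¬DifferentiableAt ℝ f z} ∩ interior t, ?_, ?_⟩
  · exact Filter.inter_mem self_mem_nhdsWithin
      (mem_nhdsWithin_of_mem_nhds (interior_mem_nhds.2 ht))
  · have hae := hlip.ae_differentiableWithinAt_of_mem
      (μ := (volume : Measure (EuclideanSpace ℝ (Fin n))))
    rw [ae_iff] at hae
    apply measure_mono_null _ hae
    intro z hz
    simp only [Set.mem_inter_iff, Set.mem_setOf_eq] at hz ⊢
    intro hcontra
    exact hz.1 ((hcontra (interior_subset hz.2)).differentiableAt
      (mem_interior_iff_mem_nhds.1 hz.2))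

lemma fubini_good {n : ℕ} {f : EuclideanSpace ℝ (Fin n) → ℝ}
    (hf : LocallyLipschitz f) (x g : EuclideanSpace ℝ (Fin n)) :
    ∀ᵐ v ∂(volume : Measure (EuclideanSpace ℝ (Fin n))),
      ∀ᵐ s ∂(volume : Measure ℝ), DifferentiableAt ℝ f (x + v - s • g) := by
  set D : Set (EuclideanSpace ℝ (Fin n)) := {y | DifferentiableAt ℝ f y} with hD
  have hDm : MeasurableSet D := measurableSet_of_differentiableAt ℝ f
  have hDc : volume Dᶜ = 0 := by
    have := locLip_ae_diff hf
    rwa [ae_iff] at this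
  set A : Set (EuclideanSpace ℝ (Fin n) × ℝ) := {p | x + p.1 - p.2 • g ∈ Dᶜ} with hA
  have hAm : MeasurableSet A := by
    have hcont : Continuous (fun p : EuclideanSpace ℝ (Fin n) × ℝ => x + p.1 - p.2 • g) := by
      fun_prop
    exact hDm.compl.preimage hcont.measurable
  have hA0 : (volume.prod (volume : Measure ℝ)) A = 0 := by
    rw [MeasureTheory.Measure.prod_apply_symm hAm]
    have : ∀ s : ℝ, (fun v => (v, s)) ⁻¹' A = (fun v => v + (x - s • g)) ⁻¹' Dᶜ := by
      intro s
      ext v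
      simp only [hA, Set.mem_preimage, Set.mem_setOf_eq]
      have : x + v - s • g = v + (x - s • g) := by abel
      rw [this]
    have h0 : ∀ s : ℝ, volume ((fun v => (v, s)) ⁻¹' A) = 0 := by
      intro s
      rw [this s, measure_preimage_add_right volume (x - s • g) Dᶜ]
      exact hDc
    simp only [h0]
    simp
  have := MeasureTheory.Measure.measure_ae_null_of_prod_null hA0
  filter_upwards [this] with v hv
  rw [ae_iff]
  have : {s : ℝ | ¬ DifferentiableAt ℝ f (x + v - s • g)} = Prod.mk v ⁻¹' A := by
    ext s; simp [hA, D]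
  rw [this]
  exact hv


lemma slope_seq {F : ℝ → ℝ} {d u : ℝ} (hF : HasDerivAt F d u) {τ : ℕ → ℝ}
    (hτ : Tendsto τ atTop (𝓝 0)) (hτ0 : ∀ k, τ k ≠ 0) :
    Tendsto (fun k => (F (u + τ k) - F u) / τ k) atTop (𝓝 d) := by
  rw [hasDerivAt_iff_tendsto_slope] at hF
  have h1 : Tendsto (fun k => u + τ k) atTop (𝓝[≠] u) := by
    apply tendsto_nhdsWithin_of_tendsto_nhds_of_eventually_within
    · simpa using (tendsto_const_nhds (x := u)).add hτ
    · filter_upwards with k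
      simp only [Set.mem_compl_iff, Set.mem_singleton_iff]
      intro h
      exact hτ0 k (by linarith [h])
  have := hF.comp h1
  have heq : (slope F u ∘ fun k => u + τ k) = fun k => (F (u + τ k) - F u) / τ k := by
    funext k
    simp only [Function.comp_apply, slope_def_field, add_sub_cancel_left]
  rwa [heq] at this

lemma key1d {h : ℝ → ℝ} (hc : Continuous h) {t C c : ℝ} (ht : 0 < t) (hC : 0 ≤ C)
    (hlip : ∀ a ∈ Icc (-1 : ℝ) (t + 1), ∀ b ∈ Icc (-1 : ℝ) (t + 1), |h a - h b| ≤ C * |a - b|)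
    (hder : ∀ᵐ s ∂(volume : Measure ℝ), s ∈ Set.Ioo 0 t → ∃ d, HasDerivAt h d s ∧ d ≤ c) :
    h t - h 0 ≤ c * t := by
  set τ : ℕ → ℝ := fun k => 1 / (k + 1) with hτdef
  have hτpos : ∀ k, 0 < τ k := fun k => by positivity
  have hτ0 : ∀ k, τ k ≠ 0 := fun k => (hτpos k).ne'
  have hτ1 : ∀ k, τ k ≤ 1 := fun k => by
    rw [hτdef]; rw [div_le_one (by positivity)]; push_cast; linarith
  have hτlim : Tendsto τ atTop (𝓝 0) := tendsto_one_div_add_atTop_nhds_zero_nat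
  set q : ℕ → ℝ → ℝ := fun k s => (h (s + τ k) - h s) / τ k with hqdef
  set G : ℝ → ℝ := fun u => ∫ s in (0 : ℝ)..u, h s with hGdef
  have hint : ∀ a b : ℝ, IntervalIntegrable h volume a b := fun a b =>
    hc.intervalIntegrable a b
  have hG : ∀ u : ℝ, HasDerivAt G (h u) u := fun u =>
    intervalIntegral.integral_hasDerivAt_right (hint 0 u)
      (hc.stronglyMeasurableAtFilter _ _) hc.continuousAt
  -- step 1 : the integral of q k over Ioo 0 t
  have step1 : ∀ k, ∫ s in Ioo (0 : ℝ) t, q k s =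
      (G (t + τ k) - G t) / τ k - (G (0 + τ k) - G 0) / τ k := by
    intro k
    have e1 : ∫ s in Ioo (0 : ℝ) t, q k s = ∫ s in (0 : ℝ)..t, q k s := by
      rw [intervalIntegral.integral_of_le ht.le,
        setIntegral_congr_set Ioo_ae_eq_Ioc]
    rw [e1, hqdef]
    have hint2 : IntervalIntegrable (fun s => h (s + τ k)) volume 0 t :=
      (hc.comp (continuous_id.add continuous_const)).intervalIntegrable 0 t
    simp only [div_eq_mul_inv]
    rw [intervalIntegral.integral_mul_const, intervalIntegral.integral_sub hint2 (hint 0 t),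
      intervalIntegral.integral_comp_add_right h (τ k)]
    have e2 : ∫ s in (0 + τ k)..(t + τ k), h s = G (t + τ k) - G (0 + τ k) := by
      rw [hGdef]
      simp only []
      rw [← intervalIntegral.integral_interval_sub_left (hint 0 (t + τ k)) (hint 0 (0 + τ k))]
    rw [e2]
    have : G t = ∫ s in (0:ℝ)..t, h s := rfl
    rw [← this]
    have : G 0 = 0 := by simp [hGdef]
    rw [this]
    ring
  -- step 2 : limit of these integrals is h t - h 0
  have step2 : Tendsto (fun k => ∫ s in Ioo (0 : ℝ) t, q k s) atTop (𝓝 (h t - h 0)) := by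
    simp only [step1]
    exact (slope_seq (hG t) hτlim hτ0).sub (slope_seq (hG 0) hτlim hτ0)
  -- pointwise bound on q
  have hqbound : ∀ k, ∀ s ∈ Ioo (0 : ℝ) t, |q k s| ≤ C := by
    intro k s hs
    have h1 : s ∈ Icc (-1 : ℝ) (t + 1) := ⟨by linarith [hs.1], by linarith [hs.2]⟩
    have h2 : s + τ k ∈ Icc (-1 : ℝ) (t + 1) :=
      ⟨by linarith [hs.1, (hτpos k).le], by linarith [hs.2, hτ1 k]⟩
    have := hlip _ h2 _ h1
    rw [hqdef]
    simp only []
    rw [abs_div, abs_of_pos (hτpos k)]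
    rw [div_le_iff₀ (hτpos k)]
    calc |h (s + τ k) - h s| ≤ C * |s + τ k - s| := this
      _ = C * τ k := by rw [show s + τ k - s = τ k by ring, abs_of_pos (hτpos k)]
  -- step 3 : dominated convergence
  have hmeasq : ∀ k, AEStronglyMeasurable (q k) (volume.restrict (Ioo 0 t)) := by
    intro k
    exact (((hc.comp (continuous_id.add continuous_const)).sub hc).div_const _).aestronglyMeasurable.restrict
  have hlim : ∀ᵐ s ∂(volume.restrict (Ioo (0:ℝ) t)),
      Tendsto (fun k => q k s) atTop (𝓝 (deriv h s)) := by
    filter_upwards [ae_restrict_mem measurableSet_Ioo, ae_restrict_of_ae hder] with s hs hders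
    obtain ⟨d, hd, _⟩ := hders hs
    rw [hd.deriv]
    exact slope_seq hd hτlim hτ0
  have step3 : Tendsto (fun k => ∫ s in Ioo (0 : ℝ) t, q k s) atTop
      (𝓝 (∫ s in Ioo (0 : ℝ) t, deriv h s)) := by
    apply MeasureTheory.tendsto_integral_of_dominated_convergence (fun _ => C) hmeasq
    · exact MeasureTheory.integrableOn_const
        (by rw [Real.volume_Ioo]; exact ENNReal.ofReal_ne_top)
    · intro k
      filter_upwards [ae_restrict_mem measurableSet_Ioo] with s hs
      rw [Real.norm_eq_abs]
      exact hqbound k s hs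
    · exact hlim
  have step4 : h t - h 0 = ∫ s in Ioo (0 : ℝ) t, deriv h s := tendsto_nhds_unique step2 step3
  -- step 5 : bound the integral
  have hderint : IntegrableOn (deriv h) (Ioo (0:ℝ) t) volume := by
    apply Integrable.mono' (g := fun _ => C)
    · exact MeasureTheory.integrableOn_const
        (by rw [Real.volume_Ioo]; exact ENNReal.ofReal_ne_top)
    · exact (measurable_deriv h).aestronglyMeasurable.restrict
    · filter_upwards [ae_restrict_mem measurableSet_Ioo, ae_restrict_of_ae hder] with s hs hders
      obtain ⟨d, hd, _⟩ := hders hs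
      rw [hd.deriv, Real.norm_eq_abs]
      have := fun k => hqbound k s hs
      have hq : Tendsto (fun k => q k s) atTop (𝓝 d) := slope_seq hd hτlim hτ0
      have h1 : Tendsto (fun k => |q k s|) atTop (𝓝 |d|) := hq.abs
      exact le_of_tendsto h1 (Filter.Eventually.of_forall this)
  have step5 : ∫ s in Ioo (0 : ℝ) t, deriv h s ≤ c * t := by
    have hcint : IntegrableOn (fun _ : ℝ => c) (Ioo (0:ℝ) t) volume := by
      exact MeasureTheory.integrableOn_const (by rw [Real.volume_Ioo]; exact ENNReal.ofReal_ne_top)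
    have hmono : ∫ s in Ioo (0 : ℝ) t, deriv h s ≤ ∫ _s in Ioo (0 : ℝ) t, c := by
      apply MeasureTheory.integral_mono_ae hderint hcint
      filter_upwards [ae_restrict_mem measurableSet_Ioo, ae_restrict_of_ae hder] with s hs hders
      obtain ⟨d, hd, hdc⟩ := hders hs
      rw [hd.deriv]; exact hdc
    calc ∫ s in Ioo (0 : ℝ) t, deriv h s ≤ ∫ _s in Ioo (0 : ℝ) t, c := hmono
      _ = (volume (Ioo (0:ℝ) t)).toReal • c := by rw [MeasureTheory.setIntegral_const]; rfl
      _ = c * t := by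
          rw [Real.volume_Ioo, ENNReal.toReal_ofReal (by linarith)]
          simp [smul_eq_mul]; ring
  linarith [step4 ▸ step5]

theorem stmt8 {n : ℕ} (f : EuclideanSpace ℝ (Fin n) → ℝ) (hf : LocallyLipschitz f)
    (x : EuclideanSpace ℝ (Fin n)) (ε : ℝ) (hε : 0 < ε)
    (g : EuclideanSpace ℝ (Fin n)) (hg : g ∈ goldstein f ε x)
    (hmin : ∀ w ∈ goldstein f ε x, ‖g‖ ^ 2 ≤ (inner ℝ w g : ℝ))
    (hg0 : g ≠ 0) :
    ∀ t : ℝ, 0 ≤ t → t ≤ ε / ‖g‖ → f (x - t • g) ≤ f x - t * ‖g‖ ^ 2 := by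
  have hgpos : 0 < ‖g‖ := norm_pos_iff.mpr hg0
  -- key claim for 0 < t with t‖g‖ < ε
  have key : ∀ t : ℝ, 0 < t → t * ‖g‖ < ε → f (x - t • g) ≤ f x - t * ‖g‖ ^ 2 := by
    intro t ht htε
    have hdense : Dense {v : EuclideanSpace ℝ (Fin n) |
        ∀ᵐ s ∂(volume : Measure ℝ), DifferentiableAt ℝ f (x + v - s • g)} :=
      MeasureTheory.Measure.dense_of_ae (fubini_good hf x g)
    set r : ℝ := ε - t * ‖g‖ with hrdef
    have hr : 0 < r := by simp [hrdef]; linarith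
    -- per-v estimate
    have main : ∀ v : EuclideanSpace ℝ (Fin n),
        (∀ᵐ s ∂(volume : Measure ℝ), DifferentiableAt ℝ f (x + v - s • g)) →
        ‖v‖ ≤ r → f (x + v - t • g) ≤ f (x + v) - ‖g‖ ^ 2 * t := by
      intro v hv hvnorm
      set h : ℝ → ℝ := fun s => f (x + v - s • g) with hhdef
      have hψcont : Continuous fun s : ℝ => x + v - s • g := by fun_prop
      have hcont : Continuous h := hf.continuous.comp hψcont
      obtain ⟨C, hC0, hCl⟩ := locLip_bound_on_compact hf
        (K := (fun s : ℝ => x + v - s • g) '' Icc (-1) (t + 1))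
        (isCompact_Icc.image hψcont)
      have hlip : ∀ a ∈ Icc (-1 : ℝ) (t + 1), ∀ b ∈ Icc (-1 : ℝ) (t + 1),
          |h a - h b| ≤ (C * ‖g‖) * |a - b| := by
        intro a ha b hb
        have hest := hCl _ (mem_image_of_mem _ ha) _ (mem_image_of_mem _ hb)
        have hdist : dist (x + v - a • g) (x + v - b • g) = |a - b| * ‖g‖ := by
          rw [dist_eq_norm]
          have heq : (x + v - a • g) - (x + v - b • g) = (b - a) • g := by
            rw [sub_smul]; abel
          rw [heq, norm_smul, Real.norm_eq_abs, abs_sub_comm]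
        calc |h a - h b| ≤ C * (|a - b| * ‖g‖) := by rw [← hdist]; exact hest
          _ = (C * ‖g‖) * |a - b| := by ring
      have hder : ∀ᵐ s ∂(volume : Measure ℝ), s ∈ Set.Ioo 0 t →
          ∃ d, HasDerivAt h d s ∧ d ≤ -‖g‖ ^ 2 := by
        filter_upwards [hv] with s hdiff hs
        set p : EuclideanSpace ℝ (Fin n) := x + v - s • g with hpdef
        have hψ : HasDerivAt (fun s : ℝ => x + v - s • g) (-g) s := by
          have h1 : HasDerivAt (fun s : ℝ => s • g) g s := by
            simpa using (hasDerivAt_id s).smul_const g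
          simpa using h1.const_sub (x + v)
        have hcomp : HasDerivAt h (fderiv ℝ f p (-g)) s :=
          hdiff.hasFDerivAt.comp_hasDerivAt s hψ
        refine ⟨fderiv ℝ f p (-g), hcomp, ?_⟩
        have hmem : gradient f p ∈ goldstein f ε x := by
          apply subset_closure
          apply subset_convexHull ℝ _ _
          refine ⟨p, ?_, fun _ => p, tendsto_const_nhds, fun _ => hdiff, tendsto_const_nhds⟩
          have heq : p - x = v - s • g := by rw [hpdef]; abel
          rw [heq]
          calc ‖v - s • g‖ ≤ ‖v‖ + ‖s • g‖ := norm_sub_le _ _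
            _ ≤ r + t * ‖g‖ := by
                apply add_le_add hvnorm
                rw [norm_smul, Real.norm_eq_abs, abs_of_pos hs.1]
                exact mul_le_mul_of_nonneg_right hs.2.le (norm_nonneg g)
            _ = ε := by rw [hrdef]; ring
        have hmin' := hmin _ hmem
        have hid : (inner ℝ (gradient f p) (-g) : ℝ) = fderiv ℝ f p (-g) := by
          rw [gradient]
          exact InnerProductSpace.toDual_symm_apply
        rw [← hid, inner_neg_right]
        linarith
      have hkey := key1d hcont ht (by positivity) hlip hder
      have h0eq : h 0 = f (x + v) := by simp [hhdef]
      have hteq : h t = f (x + v - t • g) := rfl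
      rw [h0eq, hteq] at hkey
      linarith
    -- choose a sequence of good perturbations tending to 0
    have hseq : ∀ k : ℕ, ∃ v : EuclideanSpace ℝ (Fin n),
        (∀ᵐ s ∂(volume : Measure ℝ), DifferentiableAt ℝ f (x + v - s • g)) ∧
        ‖v‖ ≤ min r (1 / (k + 1)) := by
      intro k
      obtain ⟨v, hv1, hv2⟩ := Metric.dense_iff.1 hdense 0 (min r (1 / (k + 1)))
        (lt_min hr (by positivity))
      refine ⟨v, hv2, ?_⟩
      have := Metric.mem_ball.1 hv1
      rw [dist_zero_right] at this
      exact this.le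
    choose v hvgood hvnorm using hseq
    have hvlim : Tendsto v atTop (𝓝 0) := by
      apply squeeze_zero_norm (fun k => (hvnorm k).trans (min_le_right _ _))
      exact tendsto_one_div_add_atTop_nhds_zero_nat
    have h1 : Tendsto (fun k => f (x + v k - t • g)) atTop (𝓝 (f (x - t • g))) := by
      have hc : Continuous fun w : EuclideanSpace ℝ (Fin n) => f (x + w - t • g) :=
        hf.continuous.comp (by fun_prop)
      have := (hc.tendsto 0).comp hvlim
      simpa [Function.comp_def] using this
    have h2 : Tendsto (fun k => f (x + v k) - ‖g‖ ^ 2 * t) atTop (𝓝 (f x - ‖g‖ ^ 2 * t)) := by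
      have hc : Continuous fun w : EuclideanSpace ℝ (Fin n) => f (x + w) :=
        hf.continuous.comp (by fun_prop)
      have := (hc.tendsto 0).comp hvlim
      simp only [add_zero] at this
      exact this.sub tendsto_const_nhds
    have hle : ∀ k, f (x + v k - t • g) ≤ f (x + v k) - ‖g‖ ^ 2 * t := fun k =>
      main (v k) (hvgood k) ((hvnorm k).trans (min_le_left _ _))
    have := le_of_tendsto_of_tendsto' h1 h2 hle
    linarith
  -- closure argument
  intro t ht hT
  have hS : IsClosed {t : ℝ | f (x - t • g) ≤ f x - t * ‖g‖ ^ 2} := by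
    apply isClosed_le
    · exact hf.continuous.comp (by fun_prop)
    · fun_prop
  have hIco : Ico (0 : ℝ) (ε / ‖g‖) ⊆ {t : ℝ | f (x - t • g) ≤ f x - t * ‖g‖ ^ 2} := by
    rintro t' ⟨h0, h1⟩
    rcases eq_or_lt_of_le h0 with h0' | h0'
    · simp [← h0']
    · exact key t' h0' ((lt_div_iff₀ hgpos).mp h1)
  have hsub := closure_minimal hIco hS
  rw [closure_Ico (ne_of_lt (div_pos hε hgpos))] at hsub
  exact hsub ⟨ht, hT⟩
end
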